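/- (Fejér theorem for nonlinear Fourier series) If f is continuous and 2π-periodic, then the nonlinear Fejér means converge uniformly: ‖f - σ_n^a(f)‖_∞ → 0 as n → ∞. -/

import Mathlib

open Real MeasureTheory

/-- The Poisson kernel associated with `a = |a| e^{i t_a}`. -/
noncomputable def poisson (a : ℂ) (ta : ℝ) (t : ℝ) : ℝ :=
  (1 - ‖a‖ ^ 2) / (1 - 2 * ‖a‖ * Real.cos (t - ta) + ‖a‖ ^ 2)

/-- The Dirichlet kernel `D_n(u) = sin((n+1/2)u)/sin(u/2)`. -/
noncomputable def dirichlet (n : ℕ) (u : ℝ) : ℝ :=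
  Real.sin (((n : ℝ) + 1 / 2) * u) / Real.sin (u / 2)

/-- The Fejér kernel `K_n = (D_0 + ⋯ + D_n)/(n+1)`. -/
noncomputable def fejer (n : ℕ) (u : ℝ) : ℝ :=
  (1 / ((n : ℝ) + 1)) * ∑ k ∈ Finset.range (n + 1), dirichlet k u

/-- The `k`-th nonlinear Fourier coefficient of `f`. -/
noncomputable def coeff (θ p : ℝ → ℝ) (f : ℝ → ℂ) (k : ℤ) : ℂ :=
  (1 / (2 * π)) * ∫ t in (-π)..π,
    f t * Complex.exp (-(Complex.I * (k : ℂ) * (θ t : ℂ))) * (p t : ℂ)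

/-- The `n`-th partial sum of the nonlinear Fourier series of `f`. -/
noncomputable def partialSum (θ p : ℝ → ℝ) (f : ℝ → ℂ) (n : ℕ) (x : ℝ) : ℂ :=
  ∑ k ∈ Finset.Icc (-(n : ℤ)) (n : ℤ),
    coeff θ p f k * Complex.exp (Complex.I * (k : ℂ) * (θ x : ℂ))

/-- The `n`-th Fejér (Cesàro) mean of the nonlinear Fourier series of `f`. -/
noncomputable def cesaro (θ p : ℝ → ℝ) (f : ℝ → ℂ) (n : ℕ) (x : ℝ) : ℂ :=
  (1 / ((n : ℂ) + 1)) * ∑ k ∈ Finset.range (n + 1), partialSum θ p f k x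


noncomputable def cKer (n : ℕ) (u : ℝ) : ℂ :=
  ∑ k ∈ Finset.range (n+1), ∑ j ∈ Finset.Icc (-(k:ℤ)) (k:ℤ),
    Complex.exp (Complex.I * (j:ℂ) * (u:ℂ))

noncomputable def rKer (n : ℕ) (u : ℝ) : ℝ :=
  ‖∑ j ∈ Finset.range (n+1), Complex.exp (Complex.I * (j:ℂ) * (u:ℂ))‖^2

noncomputable def cCoeff (F : ℝ → ℂ) (k : ℤ) : ℂ :=
  (1 / (2 * π)) * ∫ t in (-π)..π,
    F t * Complex.exp (-(Complex.I * (k : ℂ) * (t : ℂ)))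

noncomputable def cCesaro (F : ℝ → ℂ) (n : ℕ) (y : ℝ) : ℂ :=
  (1 / ((n : ℂ) + 1)) * ∑ k ∈ Finset.range (n + 1),
    ∑ j ∈ Finset.Icc (-(k : ℤ)) (k : ℤ), cCoeff F j * Complex.exp (Complex.I * (j : ℂ) * (y : ℂ))

lemma sum_range_shift (g : ℤ → ℂ) (c : ℤ) (N : ℕ) :
    ∑ j ∈ Finset.range N, g (c + j) = ∑ j ∈ Finset.Ico c (c + N), g j := by
  refine Finset.sum_nbij' (i := fun (j : ℕ) => c + (j : ℤ)) (j := fun j => (j - c).toNat)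
    ?_ ?_ ?_ ?_ ?_
  · intro a ha; simp only [Finset.mem_range] at ha
    simp only [Finset.mem_Ico]; omega
  · intro a ha; simp only [Finset.mem_Ico] at ha
    simp only [Finset.mem_range]; omega
  · intro a ha; simp only [Finset.mem_range] at ha
    show (c + (a:ℤ) - c).toNat = a; omega
  · intro a ha; simp only [Finset.mem_Ico] at ha
    show c + ((a - c).toNat : ℤ) = a; omega
  · intro a ha; rfl

lemma dirichlet_split (z : ℂ) (N : ℕ) :
    ∑ j ∈ Finset.Icc (-(N:ℤ)) (N:ℤ), z ^ j
      = ∑ l ∈ Finset.range (N+1), z ^ ((N:ℤ) - l) + ∑ j ∈ Finset.range N, z ^ ((j:ℤ) - N) := by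
  have h1 : ∑ l ∈ Finset.range (N+1), z ^ ((N:ℤ) - l) = ∑ j ∈ Finset.Ico (0:ℤ) ((N:ℤ)+1), z ^ j := by
    have := sum_range_shift (fun j => z ^ j) 0 (N+1)
    rw [← Finset.sum_range_reflect (fun l => z ^ ((N:ℤ) - l)) (N+1)]
    simp only [zero_add] at this
    rw [show ((N:ℤ)+1) = ((N+1 : ℕ) : ℤ) by push_cast; ring, ← this]
    apply Finset.sum_congr rfl
    intro l hl; simp only [Finset.mem_range] at hl
    congr 1; omega
  have h2 : ∑ j ∈ Finset.range N, z ^ ((j:ℤ) - N) = ∑ j ∈ Finset.Ico (-(N:ℤ)) 0, z ^ j := by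
    have := sum_range_shift (fun j => z ^ j) (-(N:ℤ)) N
    rw [show (-(N:ℤ) + N) = 0 by ring] at this
    rw [← this]
    apply Finset.sum_congr rfl
    intro l hl; congr 1; omega
  rw [h1, h2]
  have h3 : Finset.Icc (-(N:ℤ)) (N:ℤ) = Finset.Ico (-(N:ℤ)) ((N:ℤ)+1) := by
    ext x; simp only [Finset.mem_Icc, Finset.mem_Ico]; omega
  rw [h3, ← Finset.Ico_union_Ico_eq_Ico (by omega : (-(N:ℤ)) ≤ 0) (by omega : (0:ℤ) ≤ (N:ℤ)+1),
    Finset.sum_union]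
  · ring
  · rw [Finset.disjoint_left]; intro x hx hx'
    simp only [Finset.mem_Ico] at hx hx'; omega
lemma sum_ker_eq (z : ℂ) (hz0 : z ≠ 0) (n : ℕ) :
    ∑ k ∈ Finset.range (n+1), ∑ j ∈ Finset.Icc (-(k:ℤ)) (k:ℤ), z ^ j
      = (∑ j ∈ Finset.range (n+1), z ^ (j:ℤ)) * (∑ j ∈ Finset.range (n+1), z ^ (-(j:ℤ))) := by
  induction n with
  | zero => simp
  | succ n ih =>
    rw [Finset.sum_range_succ, ih, dirichlet_split z (n+1)]
    have e1 : ∑ l ∈ Finset.range (n+1+1), z ^ (((n+1:ℕ):ℤ) - (l:ℕ))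
        = (∑ l ∈ Finset.range (n+1), z ^ (-(l:ℤ))) * z ^ (((n+1:ℕ):ℤ)) + 1 := by
      rw [Finset.sum_range_succ, Finset.sum_mul]
      congr 1
      · exact Finset.sum_congr rfl fun l _ => by
          rw [← zpow_add₀ hz0, neg_add_eq_sub]
      · rw [sub_self, zpow_zero]
    have e2 : ∑ j ∈ Finset.range (n+1), z ^ ((j:ℤ) - ((n+1:ℕ):ℤ))
        = (∑ j ∈ Finset.range (n+1), z ^ (j:ℤ)) * z ^ (-((n+1:ℕ):ℤ)) := by
      rw [Finset.sum_mul]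
      exact Finset.sum_congr rfl fun l _ => by
        rw [← zpow_add₀ hz0, ← sub_eq_add_neg]
    have h1 : z ^ (((n+1:ℕ):ℤ)) * z ^ (-((n+1:ℕ):ℤ)) = 1 := by
      rw [← zpow_add₀ hz0, add_neg_cancel, zpow_zero]
    rw [Finset.sum_range_succ (fun j => z ^ (j:ℤ)) (n+1),
      Finset.sum_range_succ (fun j => z ^ (-(j:ℤ))) (n+1)]
    push_cast at e1 e2 h1 ⊢
    rw [e1, e2]
    generalize z ^ ((n:ℤ)+1) = w at h1 ⊢
    generalize z ^ (-((n:ℤ)+1)) = v at h1 ⊢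
    linear_combination -h1
lemma exp_eq_zpow (u : ℝ) (j : ℤ) :
    Complex.exp (Complex.I * (j:ℂ) * (u:ℂ)) = (Complex.exp (Complex.I * u)) ^ j := by
  rw [← Complex.exp_int_mul]; congr 1; ring

lemma norm_exp_I_mul (u : ℝ) : ‖Complex.exp (Complex.I * u)‖ = 1 := by
  rw [mul_comm]; exact Complex.norm_exp_ofReal_mul_I u

lemma cKer_eq (n : ℕ) (u : ℝ) : cKer n u = ((rKer n u : ℝ) : ℂ) := by
  set z := Complex.exp (Complex.I * u) with hzdef
  have hz : ‖z‖ = 1 := norm_exp_I_mul u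
  have hz0 : z ≠ 0 := by intro h; rw [h] at hz; simp at hz
  have hG : ∀ j : ℕ, Complex.exp (Complex.I * (j:ℂ) * (u:ℂ)) = z ^ (j:ℤ) := by
    intro j; rw [← Complex.exp_int_mul]; congr 1; push_cast; ring
  have hconj : ∀ j : ℕ, z ^ (-(j:ℤ)) = (starRingEnd ℂ) (z ^ (j:ℤ)) := by
    intro j
    rw [map_zpow₀, ← Complex.inv_eq_conj hz, inv_zpow, ← zpow_neg]
  have h1 : cKer n u = ∑ k ∈ Finset.range (n+1), ∑ j ∈ Finset.Icc (-(k:ℤ)) (k:ℤ), z ^ j := by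
    unfold cKer
    exact Finset.sum_congr rfl fun k _ => Finset.sum_congr rfl fun j _ => by
      rw [← Complex.exp_int_mul]; congr 1; ring
  rw [h1, sum_ker_eq z hz0 n]
  have h2 : ∑ j ∈ Finset.range (n+1), z ^ (-(j:ℤ))
      = (starRingEnd ℂ) (∑ j ∈ Finset.range (n+1), z ^ (j:ℤ)) := by
    rw [map_sum]; exact Finset.sum_congr rfl fun j _ => hconj j
  rw [h2, Complex.mul_conj']
  unfold rKer
  norm_cast
  congr 2
  exact Finset.sum_congr rfl fun j _ => (hG j).symm

lemma rKer_nonneg (n : ℕ) (u : ℝ) : 0 ≤ rKer n u := sq_nonneg _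

lemma cKer_cont (n : ℕ) : Continuous (cKer n) := by
  unfold cKer
  exact continuous_finset_sum _ fun k _ => continuous_finset_sum _ fun j _ =>
    Complex.continuous_exp.comp (continuous_const.mul Complex.continuous_ofReal)

lemma rKer_cont (n : ℕ) : Continuous (rKer n) := by
  unfold rKer
  exact (continuous_finset_sum _ fun j _ =>
    Complex.continuous_exp.comp (continuous_const.mul Complex.continuous_ofReal)).norm.pow 2

lemma cKer_periodic (n : ℕ) : Function.Periodic (cKer n) (2*π) := by
  intro u
  unfold cKer
  refine Finset.sum_congr rfl fun k _ => Finset.sum_congr rfl fun j _ => ?_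
  rw [exp_eq_zpow, exp_eq_zpow]
  congr 1
  push_cast
  rw [mul_add, Complex.exp_add]
  have : Complex.exp (Complex.I * (2*π)) = 1 := by
    have := Complex.exp_int_mul_two_pi_mul_I 1
    push_cast at this
    rw [← this]; congr 1; ring
  rw [this, mul_one]

lemma integral_exp_int (j : ℤ) (hj : j ≠ 0) :
    ∫ t in (-π)..π, Complex.exp (Complex.I * (j:ℂ) * (t:ℂ)) = 0 := by
  have hc : (Complex.I * (j:ℂ)) ≠ 0 := by
    simp [Complex.I_ne_zero, hj]
  have := integral_exp_mul_complex (a := -π) (b := π) hc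
  have hper : Complex.exp (Complex.I * (j:ℂ) * ((π:ℝ):ℂ)) = Complex.exp (Complex.I * (j:ℂ) * ((-π:ℝ):ℂ)) := by
    rw [show (Complex.I*(j:ℂ)*((π:ℝ):ℂ)) = Complex.I*(j:ℂ)*((-π:ℝ):ℂ) + (j:ℂ)*(2*(π:ℝ)*Complex.I) by push_cast; ring,
      Complex.exp_add, Complex.exp_int_mul_two_pi_mul_I, mul_one]
  rw [this, hper, sub_self, zero_div]

lemma integral_cKer (n : ℕ) : ∫ t in (-π)..π, cKer n t = 2*π*(n+1) := by
  unfold cKer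
  rw [intervalIntegral.integral_finset_sum]
  · have : ∀ k ∈ Finset.range (n+1),
        (∫ t in (-π)..π, ∑ j ∈ Finset.Icc (-(k:ℤ)) (k:ℤ), Complex.exp (Complex.I * (j:ℂ) * (t:ℂ)))
          = 2*π := by
      intro k _
      rw [intervalIntegral.integral_finset_sum]
      · rw [Finset.sum_eq_single 0]
        · norm_num
          rw [two_mul]
        · intro j _ hj; exact integral_exp_int j hj
        · intro h; simp at h
      · intro j _
        exact (Complex.continuous_exp.comp (continuous_const.mul Complex.continuous_ofReal)).intervalIntegrable _ _
    rw [Finset.sum_congr rfl this]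
    simp
    push_cast
    ring
  · intro k _
    exact (continuous_finset_sum _ fun j _ =>
      Complex.continuous_exp.comp (continuous_const.mul Complex.continuous_ofReal)).intervalIntegrable _ _

lemma integral_rKer (n : ℕ) : ∫ t in (-π)..π, rKer n t = 2*π*(n+1) := by
  have h := integral_cKer n
  rw [intervalIntegral.integral_congr (g := fun t => ((rKer n t : ℝ) : ℂ))
    (fun t _ => cKer_eq n t)] at h
  rw [intervalIntegral.integral_ofReal] at h
  exact_mod_cast h
lemma norm_exp_I_mul_sub_one_sq (u : ℝ) :
    ‖Complex.exp (Complex.I * u) - 1‖^2 = 2 - 2 * Real.cos u := by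
  rw [mul_comm, Complex.exp_mul_I]
  have h : (Complex.cos u + Complex.sin u * Complex.I - 1)
      = Complex.mk (Real.cos u - 1) (Real.sin u) := by
    apply Complex.ext <;>
      simp [Complex.cos_ofReal_re, Complex.sin_ofReal_re]
  rw [h, Complex.sq_norm, Complex.normSq_mk]
  have := Real.sin_sq_add_cos_sq u
  nlinarith [this]

lemma rKer_le (n : ℕ) (δ u : ℝ) (hδ : 0 < δ) (h1 : δ ≤ |u|) (h2 : |u| ≤ π) :
    rKer n u ≤ 4 / (2 - 2 * Real.cos δ) := by
  have hδπ : δ ≤ π := le_trans h1 h2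
  have hcosδ : Real.cos δ < 1 := by
    have := Real.cos_lt_cos_of_nonneg_of_le_pi (le_refl 0) hδπ hδ
    simpa using this
  have hden : 0 < 2 - 2 * Real.cos δ := by linarith
  have hcos : Real.cos u ≤ Real.cos δ := by
    rw [← Real.cos_abs u]
    exact Real.cos_le_cos_of_nonneg_of_le_pi (le_of_lt hδ) h2 h1
  set z := Complex.exp (Complex.I * u) with hzdef
  have hz : ‖z‖ = 1 := by rw [hzdef, mul_comm]; exact Complex.norm_exp_ofReal_mul_I u
  have hz1 : z ≠ 1 := by
    intro h
    have h2' : ‖z - 1‖^2 = 0 := by rw [h]; simp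
    rw [norm_exp_I_mul_sub_one_sq] at h2'
    nlinarith [hcos, hcosδ]
  have hzm : (0:ℝ) < ‖z - 1‖ := by
    rw [norm_pos_iff]; exact sub_ne_zero.mpr hz1
  have hG : ∑ j ∈ Finset.range (n+1), Complex.exp (Complex.I * (j:ℂ) * (u:ℂ))
      = (z ^ (n+1) - 1) / (z - 1) := by
    rw [← geom_sum_eq hz1]
    exact Finset.sum_congr rfl fun j _ => by
      rw [← Complex.exp_nat_mul]; congr 1; push_cast; ring
  have hnorm : ‖∑ j ∈ Finset.range (n+1), Complex.exp (Complex.I * (j:ℂ) * (u:ℂ))‖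
      ≤ 2 / ‖z - 1‖ := by
    rw [hG, norm_div]
    gcongr
    calc ‖z^(n+1) - 1‖ ≤ ‖z^(n+1)‖ + ‖(1:ℂ)‖ := norm_sub_le _ _
      _ = 2 := by simp [norm_pow, hz]; norm_num
  have hsq : rKer n u ≤ (2 / ‖z - 1‖)^2 := by
    unfold rKer
    exact pow_le_pow_left₀ (norm_nonneg _) hnorm 2
  have h4 : (2 / ‖z - 1‖)^2 = 4 / (2 - 2 * Real.cos u) := by
    rw [div_pow, ← norm_exp_I_mul_sub_one_sq u]
    norm_num
    rw [hzdef]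
  rw [h4] at hsq
  refine le_trans hsq ?_
  gcongr
lemma cCesaro_eq (F : ℝ → ℂ) (hF : Continuous F) (hFper : Function.Periodic F (2*π))
    (n : ℕ) (y : ℝ) :
    cCesaro F n y = (1 / ((n : ℂ) + 1)) * ((1 / (2 * π)) *
      ∫ s in (-π)..π, F (y - s) * cKer n s) := by
  have hint : ∀ (j : ℤ), IntervalIntegrable
      (fun t => F t * Complex.exp (Complex.I * (j:ℂ) * (((y:ℝ) - t : ℝ):ℂ))) MeasureTheory.volume (-π) π := by
    intro j
    apply Continuous.intervalIntegrable
    exact hF.mul (Complex.continuous_exp.comp (continuous_const.mul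
      (Complex.continuous_ofReal.comp (continuous_const.sub continuous_id))))
  have h1 : ∀ j : ℤ, cCoeff F j * Complex.exp (Complex.I * (j:ℂ) * (y:ℂ))
      = (1 / (2 * (π:ℂ))) * ∫ t in (-π)..π, F t * Complex.exp (Complex.I * (j:ℂ) * (((y:ℝ) - t : ℝ):ℂ)) := by
    intro j
    unfold cCoeff
    rw [mul_assoc]
    congr 1
    rw [← intervalIntegral.integral_mul_const]
    refine intervalIntegral.integral_congr fun t _ => ?_
    rw [mul_assoc, ← Complex.exp_add]
    congr 2
    push_cast
    ring
  unfold cCesaro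
  congr 1
  rw [intervalIntegral.integral_congr (g := fun s =>
      ∑ k ∈ Finset.range (n+1), ∑ j ∈ Finset.Icc (-(k:ℤ)) (k:ℤ),
        F (y - s) * Complex.exp (Complex.I * (j:ℂ) * (s:ℂ)))
      (fun s _ => by rw [cKer, Finset.mul_sum]; exact Finset.sum_congr rfl fun k _ => by rw [Finset.mul_sum])]
  rw [intervalIntegral.integral_finset_sum (fun k _ => ?intk)]
  case intk =>
    apply Continuous.intervalIntegrable
    exact continuous_finset_sum _ fun j _ =>
      (hF.comp (continuous_const.sub continuous_id)).mul
        (Complex.continuous_exp.comp (continuous_const.mul Complex.continuous_ofReal))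
  rw [Finset.mul_sum]
  refine Finset.sum_congr rfl fun k _ => ?_
  rw [intervalIntegral.integral_finset_sum (fun j _ => ?intj)]
  case intj =>
    apply Continuous.intervalIntegrable
    exact (hF.comp (continuous_const.sub continuous_id)).mul
      (Complex.continuous_exp.comp (continuous_const.mul Complex.continuous_ofReal))
  rw [Finset.mul_sum]
  refine Finset.sum_congr rfl fun j _ => ?_
  rw [h1 j]
  congr 1
  -- change of variables t ↦ y - s
  have hcv := intervalIntegral.integral_comp_sub_left
    (fun s => F (y - s) * Complex.exp (Complex.I * (j:ℂ) * (s:ℂ))) y (a := -π) (b := π)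
  have hL : (∫ t in (-π)..π, F (y - (y - t)) * Complex.exp (Complex.I * (j:ℂ) * (((y:ℝ) - t : ℝ):ℂ)))
      = ∫ t in (-π)..π, F t * Complex.exp (Complex.I * (j:ℂ) * (((y:ℝ) - t : ℝ):ℂ)) := by
    refine intervalIntegral.integral_congr fun t _ => by norm_num
  rw [← hL, hcv]
  have hper2 : Function.Periodic (fun s => F (y - s) * Complex.exp (Complex.I*(j:ℂ)*(s:ℂ))) (2*π) := by
    intro s
    have e1 : y - (s + 2*π) = (y - s) - 2*π := by ring
    simp only [e1, hFper.sub_eq (y - s)]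
    congr 1
    rw [show ((( s + 2*π : ℝ)):ℂ) = (s:ℂ) + 2*(π:ℝ) by push_cast; ring, mul_add, Complex.exp_add]
    rw [show Complex.I*(j:ℂ)*(2*(π:ℝ)) = (j:ℂ) * (2*(π:ℝ)*Complex.I) by ring,
      Complex.exp_int_mul_two_pi_mul_I, mul_one]
  have hshift := hper2.intervalIntegral_add_eq (y - π) (-π)
  rw [show y - π + 2*π = y - -π by ring, show -π + 2*π = π by ring] at hshift
  exact hshift
lemma fejer_pointwise (F : ℝ → ℂ) (hF : Continuous F) (hFper : Function.Periodic F (2*π))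
    (M : ℝ) (hM : ∀ y, ‖F y‖ ≤ M)
    (ε δ : ℝ) (hε : 0 ≤ ε) (hδ : 0 < δ) (hδπ : δ ≤ π)
    (hmod : ∀ y s : ℝ, |s| ≤ δ → ‖F y - F (y - s)‖ ≤ ε) (n : ℕ) (y : ℝ) :
    ‖F y - cCesaro F n y‖ ≤ ε + (2 * M * (4 / (2 - 2 * Real.cos δ))) / (n + 1) := by
  have hπ : (0:ℝ) < π := Real.pi_pos
  set C : ℝ := 4 / (2 - 2 * Real.cos δ) with hCdef
  have hM0 : 0 ≤ M := le_trans (norm_nonneg _) (hM 0)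
  have hC0 : 0 ≤ C := by
    have := le_trans (rKer_nonneg 0 δ) (rKer_le 0 δ δ hδ (by rw [abs_of_pos hδ]) (by rwa [abs_of_pos hδ]))
    exact this
  have hn1 : (0:ℝ) < (n:ℝ) + 1 := by positivity
  -- integrability facts
  have hcont1 : Continuous fun s => F (y - s) * cKer n s :=
    (hF.comp (continuous_const.sub continuous_id)).mul (cKer_cont n)
  have hcont2 : Continuous fun s => (F y - F (y - s)) * cKer n s :=
    ((continuous_const.sub (hF.comp (continuous_const.sub continuous_id)))).mul (cKer_cont n)
  -- step 1 : difference as integral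
  have key : F y - cCesaro F n y = (1 / ((n : ℂ) + 1)) * ((1 / (2 * π)) *
      ∫ s in (-π)..π, (F y - F (y - s)) * cKer n s) := by
    have hdiff : (∫ s in (-π)..π, (F y - F (y - s)) * cKer n s)
        = (∫ s in (-π)..π, F y * cKer n s) - (∫ s in (-π)..π, F (y - s) * cKer n s) := by
      rw [← intervalIntegral.integral_sub (f := fun s => F y * cKer n s) ((continuous_const.mul (cKer_cont n)).intervalIntegrable _ _)
        (hcont1.intervalIntegrable _ _)]
      exact intervalIntegral.integral_congr fun s _ => by ring
    rw [cCesaro_eq F hF hFper n y, hdiff, intervalIntegral.integral_const_mul, integral_cKer n]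
    have hn0 : ((n:ℂ) + 1) ≠ 0 := Nat.cast_add_one_ne_zero n
    have hπ0 : ((π:ℝ):ℂ) ≠ 0 := by exact_mod_cast ne_of_gt hπ
    field_simp
    try simp
    try tauto
  rw [key]
  -- step 2 : norms
  rw [norm_mul, norm_mul]
  have e1 : ‖(1 / ((n : ℂ) + 1))‖ = 1 / ((n:ℝ)+1) := by
    rw [norm_div, norm_one]
    congr 1
    rw [show ((n:ℂ)+1) = ((n+1:ℕ):ℂ) by push_cast; ring, Complex.norm_natCast]
    push_cast; ring
  have e2 : ‖(1 / (2 * (π:ℂ)))‖ = 1 / (2*π) := by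
    rw [norm_div, norm_one]
    congr 1
    rw [show (2 * (π:ℂ)) = ((2*π : ℝ):ℂ) by push_cast; ring, Complex.norm_real,
      Real.norm_eq_abs, abs_of_pos (by positivity)]
  rw [e1, e2]
  -- step 3 : bound the integral
  set g : ℝ → ℝ := fun s => ‖F y - F (y - s)‖ * rKer n s with hgdef
  have hgcont : Continuous g :=
    ((continuous_const.sub (hF.comp (continuous_const.sub continuous_id))).norm).mul (rKer_cont n)
  have hgnonneg : ∀ s, 0 ≤ g s := fun s => mul_nonneg (norm_nonneg _) (rKer_nonneg n s)
  have hnormint : ‖∫ s in (-π)..π, (F y - F (y - s)) * cKer n s‖ ≤ ∫ s in (-π)..π, g s := by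
    refine le_trans (intervalIntegral.norm_integral_le_integral_norm (by linarith)) ?_
    refine le_of_eq (intervalIntegral.integral_congr fun s _ => ?_)
    rw [norm_mul, cKer_eq n s, Complex.norm_real, Real.norm_eq_abs, abs_of_nonneg (rKer_nonneg n s)]
  -- split the integral
  have hsplit : (∫ s in (-π)..π, g s)
      = (∫ s in (-π)..(-δ), g s) + (∫ s in (-δ)..δ, g s) + (∫ s in δ..π, g s) := by
    rw [intervalIntegral.integral_add_adjacent_intervals (hgcont.intervalIntegrable _ _)
      (hgcont.intervalIntegrable _ _),
      intervalIntegral.integral_add_adjacent_intervals (hgcont.intervalIntegrable _ _)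
      (hgcont.intervalIntegrable _ _)]
  -- middle piece
  have hmid : (∫ s in (-δ)..δ, g s) ≤ ε * (2*π*(n+1)) := by
    have h1 : (∫ s in (-δ)..δ, g s) ≤ ∫ s in (-δ)..δ, ε * rKer n s := by
      refine intervalIntegral.integral_mono_on (by linarith) (hgcont.intervalIntegrable _ _)
        ((continuous_const.mul (rKer_cont n)).intervalIntegrable _ _) fun s hs => ?_
      refine mul_le_mul_of_nonneg_right ?_ (rKer_nonneg n s)
      refine hmod y s ?_
      rw [abs_le]; exact ⟨hs.1, hs.2⟩
    refine le_trans h1 ?_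
    rw [intervalIntegral.integral_const_mul]
    have h2 : (∫ s in (-δ)..δ, rKer n s) ≤ ∫ s in (-π)..π, rKer n s := by
      refine intervalIntegral.integral_mono_interval (by linarith) (by linarith) (by linarith)
        ?_ ((rKer_cont n).intervalIntegrable _ _)
      filter_upwards with s using rKer_nonneg n s
    rw [integral_rKer n] at h2
    exact mul_le_mul_of_nonneg_left h2 hε
  -- side pieces
  have hside : ∀ a b : ℝ, -π ≤ a → a ≤ b → b ≤ π → (∀ s, a ≤ s → s ≤ b → δ ≤ |s|) →
      (∫ s in a..b, g s) ≤ (b - a) * (2*M*C) := by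
    intro a b ha hab hb habs
    have h1 : (∫ s in a..b, g s) ≤ ∫ s in a..b, (2*M*C) := by
      refine intervalIntegral.integral_mono_on hab (hgcont.intervalIntegrable _ _)
        (intervalIntegrable_const) fun s hs => ?_
      have h2 : ‖F y - F (y - s)‖ ≤ 2*M := by
        refine le_trans (norm_sub_le _ _) ?_
        have := hM y; have := hM (y - s); linarith
      have h3 : rKer n s ≤ C := rKer_le n δ s hδ (habs s hs.1 hs.2)
        (by rw [abs_le]; constructor <;> linarith [hs.1, hs.2])
      calc g s ≤ (2*M) * rKer n s := mul_le_mul_of_nonneg_right h2 (rKer_nonneg n s)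
        _ ≤ (2*M) * C := mul_le_mul_of_nonneg_left h3 (by linarith)
        _ = 2*M*C := by ring
    rw [intervalIntegral.integral_const] at h1
    refine le_trans h1 (le_of_eq ?_)
    rw [smul_eq_mul]
  have hleft := hside (-π) (-δ) (le_refl _) (by linarith) (by linarith)
    (fun s h1 h2 => by rw [abs_of_nonpos (by linarith)]; linarith)
  have hright := hside δ π (by linarith) (by linarith) (le_refl _)
    (fun s h1 h2 => by rw [abs_of_nonneg (by linarith)]; linarith)
  have h2MC : (0:ℝ) ≤ 2*M*C := by positivity
  have htot : (∫ s in (-π)..π, g s) ≤ ε * (2*π*((n:ℝ)+1)) + 2*π*(2*M*C) := by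
    rw [hsplit]
    nlinarith [hleft, hright, hmid, h2MC, hδ]
  have hfin : (1/((n:ℝ)+1)) * ((1/(2*π)) * (ε*(2*π*((n:ℝ)+1)) + 2*π*(2*M*C)))
      = ε + (2*M*C)/((n:ℝ)+1) := by
    field_simp
  refine le_trans ?_ (le_of_eq hfin)
  have h1n : (0:ℝ) ≤ 1/((n:ℝ)+1) := by positivity
  have h2π : (0:ℝ) ≤ 1/(2*π) := by positivity
  refine mul_le_mul_of_nonneg_left (mul_le_mul_of_nonneg_left ?_ h2π) h1n
  exact le_trans hnormint htot
lemma exists_modulus (F : ℝ → ℂ) (hF : Continuous F) (hFper : Function.Periodic F (2*π))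
    (ε : ℝ) (hε : 0 < ε) :
    ∃ δ : ℝ, 0 < δ ∧ δ ≤ π ∧ ∀ y s : ℝ, |s| ≤ δ → ‖F y - F (y - s)‖ ≤ ε := by
  have hπ : (0:ℝ) < π := Real.pi_pos
  set K : Set ℝ := Set.Icc (-2*π-1) (2*π+1) with hK
  have hKc : IsCompact K := isCompact_Icc
  have hUC : UniformContinuousOn F K := hKc.uniformContinuousOn_of_continuous hF.continuousOn
  rw [Metric.uniformContinuousOn_iff_le] at hUC
  obtain ⟨δ0, hδ0, hδ0'⟩ := hUC ε hε
  refine ⟨min (min δ0 1) π, by positivity, min_le_right _ _, fun y s hs => ?_⟩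
  have hs1 : |s| ≤ δ0 := le_trans hs (le_trans (min_le_left _ _) (min_le_left _ _))
  have hs2 : |s| ≤ 1 := le_trans hs (le_trans (min_le_left _ _) (min_le_right _ _))
  have h2π : (0:ℝ) < 2*π := by linarith
  set y' : ℝ := toIcoMod h2π 0 y with hy'
  obtain ⟨hy'0, hy'2π⟩ := toIcoMod_mem_Ico h2π 0 y
  have hdiv : y - y' = toIcoDiv h2π 0 y • (2*π) := self_sub_toIcoMod h2π 0 y
  have hy'eq : y' = y - (toIcoDiv h2π 0 y : ℝ) * (2*π) := by
    have := hdiv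
    rw [zsmul_eq_mul] at this
    linarith
  have hFy : F y' = F y := by
    rw [hy'eq, hFper.sub_int_mul_eq]
  have hFys : F (y' - s) = F (y - s) := by
    have : y' - s = (y - s) - (toIcoDiv h2π 0 y : ℝ) * (2*π) := by rw [hy'eq]; ring
    rw [this, hFper.sub_int_mul_eq]
  rw [← hFy, ← hFys]
  have habs := abs_le.mp hs2
  have hy'K : y' ∈ K := by
    rw [hK]; constructor <;> [linarith; linarith]
  have hy'sK : y' - s ∈ K := by
    rw [hK]; constructor <;> [linarith; linarith]
  have hd : dist y' (y' - s) ≤ δ0 := by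
    rw [Real.dist_eq, show y' - (y' - s) = s by ring]
    exact hs1
  have := hδ0' y' hy'K (y' - s) hy'sK hd
  rwa [dist_eq_norm] at this

theorem classical_fejer (F : ℝ → ℂ) (hF : Continuous F) (hFper : Function.Periodic F (2*π)) :
    Filter.Tendsto (fun n : ℕ => ⨆ y : ℝ, ‖F y - cCesaro F n y‖) Filter.atTop (nhds 0) := by
  have hπ : (0:ℝ) < π := Real.pi_pos
  obtain ⟨M, hM⟩ : ∃ M : ℝ, ∀ y, ‖F y‖ ≤ M := by
    obtain ⟨C, hC⟩ := isBounded_iff_forall_norm_le.mp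
      (hFper.isBounded_of_continuous (by positivity) hF)
    exact ⟨C, fun y => hC _ ⟨y, rfl⟩⟩
  have hM0 : 0 ≤ M := le_trans (norm_nonneg _) (hM 0)
  rw [Metric.tendsto_atTop]
  intro ε hε
  obtain ⟨δ, hδ, hδπ, hmod⟩ := exists_modulus F hF hFper (ε/3) (by linarith)
  set C : ℝ := 2 * M * (4 / (2 - 2 * Real.cos δ)) with hCdef
  have hC0 : 0 ≤ C := by
    have hcosδ : Real.cos δ < 1 := by
      have := Real.cos_lt_cos_of_nonneg_of_le_pi (le_refl 0) hδπ hδ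
      simpa using this
    have : (0:ℝ) < 2 - 2*Real.cos δ := by linarith
    positivity
  obtain ⟨N, hN⟩ := exists_nat_gt (3 * C / ε)
  refine ⟨N, fun n hn => ?_⟩
  have hn1 : (0:ℝ) < (n:ℝ) + 1 := by positivity
  have hCn : C / ((n:ℝ)+1) < ε/3 := by
    have hNn : (3 * C / ε) < (n:ℝ) + 1 := by
      have : (N:ℝ) ≤ n := by exact_mod_cast hn
      linarith
    rw [div_lt_iff₀ hn1]
    rw [div_lt_iff₀ (by linarith : (0:ℝ) < ε)] at hNn
    nlinarith
  have hbound : ∀ y : ℝ, ‖F y - cCesaro F n y‖ ≤ ε/3 + C/((n:ℝ)+1) := fun y =>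
    fejer_pointwise F hF hFper M hM (ε/3) δ (by linarith) hδ hδπ hmod n y
  have hsup : (⨆ y : ℝ, ‖F y - cCesaro F n y‖) ≤ ε/3 + C/((n:ℝ)+1) :=
    Real.iSup_le hbound (by positivity)
  have hsup0 : 0 ≤ ⨆ y : ℝ, ‖F y - cCesaro F n y‖ :=
    Real.iSup_nonneg fun y => norm_nonneg _
  rw [Real.dist_eq, sub_zero, abs_of_nonneg hsup0]
  have : C / ((n:ℝ)+1) ≥ 0 := by positivity
  calc (⨆ y : ℝ, ‖F y - cCesaro F n y‖) ≤ ε/3 + C/((n:ℝ)+1) := hsup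
    _ < ε/3 + ε/3 := by linarith
    _ < ε := by linarith

theorem fejer_theorem_nonlinear_fourier
    (a : ℂ) (ha : ‖a‖ < 1) (ta : ℝ) (hA : a = (‖a‖ : ℂ) * Complex.exp (Complex.I * (ta : ℂ)))
    (θ : ℝ → ℝ) (hθc : Continuous θ) (hθm : StrictMono θ)
    (hper : ∀ t : ℝ, θ (t + 2 * π) = θ t + 2 * π)
    (hderiv : ∀ t : ℝ, HasDerivAt θ (poisson a ta t) t)
    (f : ℝ → ℂ) (hf : Continuous f) (hfper : Function.Periodic f (2 * π)) :
    Filter.Tendsto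
      (fun n : ℕ => ⨆ x : ℝ, ‖f x - cesaro θ (poisson a ta) f n x‖)
      Filter.atTop (nhds 0) := by
  have hπ : (0:ℝ) < π := Real.pi_pos
  have ha0 : (0:ℝ) ≤ ‖a‖ := norm_nonneg a
  -- continuity of the Poisson kernel
  have hp_cont : Continuous (poisson a ta) := by
    unfold poisson
    apply continuous_const.div
    · fun_prop
    · intro t
      have hcos : Real.cos (t - ta) ≤ 1 := Real.cos_le_one _
      have hcos' : -1 ≤ Real.cos (t - ta) := Real.neg_one_le_cos _
      nlinarith
  -- θ is surjective
  have hperN : ∀ (k : ℕ) (t : ℝ), θ (t + k*(2*π)) = θ t + k*(2*π) := by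
    intro k
    induction k with
    | zero => simp
    | succ k ih =>
      intro t
      have : t + (k+1 : ℕ)*(2*π) = (t + k*(2*π)) + 2*π := by push_cast; ring
      rw [this, hper, ih]
      push_cast; ring
  have hsurj : Function.Surjective θ := by
    apply Continuous.surjective hθc
    · apply Monotone.tendsto_atTop_atTop hθm.monotone
      intro b
      obtain ⟨k, hk⟩ := exists_nat_ge ((b - θ 0)/(2*π))
      refine ⟨(k:ℝ)*(2*π), ?_⟩
      have : θ ((k:ℝ)*(2*π)) = θ 0 + k*(2*π) := by
        have := hperN k 0; rwa [zero_add] at this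
      rw [this]
      rw [div_le_iff₀ (by linarith)] at hk
      linarith
    · apply Monotone.tendsto_atBot_atBot hθm.monotone
      intro b
      obtain ⟨k, hk⟩ := exists_nat_ge ((θ 0 - b)/(2*π))
      refine ⟨-((k:ℝ)*(2*π)), ?_⟩
      have h1 : θ (-((k:ℝ)*(2*π)) + k*(2*π)) = θ (-((k:ℝ)*(2*π))) + k*(2*π) := hperN k _
      rw [show -((k:ℝ)*(2*π)) + k*(2*π) = 0 by ring] at h1
      rw [div_le_iff₀ (by linarith)] at hk
      linarith
  -- the inverse homeomorphism
  set E := StrictMono.orderIsoOfSurjective θ hθm hsurj with hE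
  have hEapp : ∀ x, E x = θ x := fun x => rfl
  set ψ : ℝ → ℝ := fun y => E.symm y with hψ
  have hψθ : ∀ x, ψ (θ x) = x := by
    intro x
    have : E.symm (E x) = x := E.symm_apply_apply x
    rwa [hEapp] at this
  have hθψ : ∀ y, θ (ψ y) = y := by
    intro y
    have : E (E.symm y) = y := E.apply_symm_apply y
    rwa [hEapp] at this
  have hψc : Continuous ψ := (OrderIso.continuous E.symm)
  have hψper : ∀ y, ψ (y + 2*π) = ψ y + 2*π := by
    intro y
    apply hθm.injective
    rw [hθψ, hper, hθψ]
  set F : ℝ → ℂ := fun y => f (ψ y) with hF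
  have hFc : Continuous F := hf.comp hψc
  have hFper : Function.Periodic F (2*π) := by
    intro y
    simp only [hF]
    rw [hψper, hfper (ψ y)]
  have hfF : ∀ x, f x = F (θ x) := by
    intro x; simp only [hF, hψθ]
  -- coefficients agree
  have hcoeff : ∀ k : ℤ, coeff θ (poisson a ta) f k = cCoeff F k := by
    intro k
    unfold coeff cCoeff
    congr 1
    set g : ℝ → ℂ := fun u => F u * Complex.exp (-(Complex.I * (k:ℂ) * (u:ℂ))) with hg
    have hgcont : Continuous g :=
      hFc.mul (Complex.continuous_exp.comp (continuous_const.mul Complex.continuous_ofReal).neg)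
    have hcv := intervalIntegral.integral_comp_smul_deriv
      (f := θ) (f' := poisson a ta) (g := g) (a := -π) (b := π)
      (fun x _ => hderiv x) hp_cont.continuousOn hgcont
    have hL : ∫ x in (-π)..π, (poisson a ta x) • (g ∘ θ) x
        = ∫ t in (-π)..π, f t * Complex.exp (-(Complex.I * (k:ℂ) * ((θ t :ℝ):ℂ))) * ((poisson a ta t :ℝ):ℂ) := by
      refine intervalIntegral.integral_congr fun t _ => ?_
      show (poisson a ta t) • (g (θ t)) = _
      rw [hg]
      simp only []
      rw [← hfF t, Complex.real_smul]
      ring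
    rw [hL] at hcv
    rw [hcv]
    -- now shift the interval
    have hgper : Function.Periodic g (2*π) := by
      intro u
      simp only [hg]
      rw [hFper u]
      congr 1
      rw [show (((u + 2*π : ℝ)):ℂ) = (u:ℂ) + 2*(π:ℝ) by push_cast; ring]
      rw [show -(Complex.I * (k:ℂ) * ((u:ℂ) + 2*(π:ℝ))) = -(Complex.I * (k:ℂ) * (u:ℂ)) + (-k:ℤ) * (2*(π:ℝ)*Complex.I) by push_cast; ring]
      rw [Complex.exp_add, Complex.exp_int_mul_two_pi_mul_I, mul_one]
    have hθπ : θ π = θ (-π) + 2*π := by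
      have := hper (-π)
      rwa [show -π + 2*π = π by ring] at this
    rw [hθπ]
    have := hgper.intervalIntegral_add_eq (θ (-π)) (-π)
    rw [show -π + 2*π = π by ring] at this
    exact this
  -- cesàro means agree
  have hces : ∀ (n : ℕ) (x : ℝ), cesaro θ (poisson a ta) f n x = cCesaro F n (θ x) := by
    intro n x
    unfold cesaro partialSum cCesaro
    congr 1
    refine Finset.sum_congr rfl fun k _ => Finset.sum_congr rfl fun j _ => ?_
    rw [hcoeff j]
  -- transfer the supremum
  have hsup : ∀ n : ℕ, (⨆ x : ℝ, ‖f x - cesaro θ (poisson a ta) f n x‖)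
      = ⨆ y : ℝ, ‖F y - cCesaro F n y‖ := by
    intro n
    rw [← hsurj.iSup_comp (g := fun y => ‖F y - cCesaro F n y‖)]
    exact iSup_congr fun x => by rw [hfF x, hces n x]
  simp only [hsup]
  exact classical_fejer F hFc hFper
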